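/- Let Q be a real symmetric positive definite d×d matrix defining the inner product (x, y) = xᵀQy on ℝ^d, and let v_1, …, v_d ∈ ℝ^d be linearly independent. Then the circumradius of the simplex conv{0, v_1, …, v_d} with respect to Q is at most 1 if and only if the (d+1)×(d+1) symmetric matrix BR(Q) — whose (0,0) entry is 4, whose (0,i) and (i,0) entries are (v_i, v_i) for 1 ≤ i ≤ d, and whose (i,j) entry is (v_i, v_j) for 1 ≤ i, j ≤ d — is positive semidefinite. -/

import Mathlib

open Matrix

/-- The `(d+1)×(d+1)` matrix `BR(Q)`: its `(0,0)` entry is `4`, its `(0,i)` and `(i,0)`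
entries are `(vᵢ, vᵢ)` for `1 ≤ i ≤ d`, and its `(i,j)` entry is `(vᵢ, vⱼ)` for
`1 ≤ i, j ≤ d`, where `(x, y) = xᵀ Q y`. -/
noncomputable def brMat {d : ℕ} (Q : Matrix (Fin d) (Fin d) ℝ)
    (v : Fin d → Fin d → ℝ) : Matrix (Fin (d + 1)) (Fin (d + 1)) ℝ :=
  Matrix.of fun i j =>
    if hi : i = 0 then
      if hj : j = 0 then 4 else v (j.pred hj) ⬝ᵥ (Q *ᵥ v (j.pred hj))
    else
      if hj : j = 0 then v (i.pred hi) ⬝ᵥ (Q *ᵥ v (i.pred hi))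
      else v (i.pred hi) ⬝ᵥ (Q *ᵥ v (j.pred hj))

/-- The circumradius of the simplex `conv{0, v₁, …, v_d}` with respect to the inner product
given by a symmetric positive definite matrix `Q` is at most `1` if and only if the matrix
`BR(Q)` is positive semidefinite. -/
theorem circumradius_le_one_iff_brMat_posSemidef {d : ℕ} (Q : Matrix (Fin d) (Fin d) ℝ)
    (hQsymm : Q.IsSymm) (hQpd : Q.PosDef)
    (v : Fin d → Fin d → ℝ) (hv : LinearIndependent ℝ v)
    (c : Fin d → ℝ)
    (hc : ∀ i, c ⬝ᵥ (Q *ᵥ c) = (v i - c) ⬝ᵥ (Q *ᵥ (v i - c))) :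
    Real.sqrt (c ⬝ᵥ (Q *ᵥ c)) ≤ 1 ↔ (brMat Q v).PosSemidef := by
  have hsym : ∀ a b : Fin d → ℝ, a ⬝ᵥ (Q *ᵥ b) = b ⬝ᵥ (Q *ᵥ a) := fun a b => by
    rw [dotProduct_mulVec, ← mulVec_transpose, hQsymm.eq, dotProduct_comm]
  -- the key consequence of being circumcenter
  have hg : ∀ i, v i ⬝ᵥ (Q *ᵥ v i) = 2 * (c ⬝ᵥ (Q *ᵥ v i)) := by
    intro i
    have h := hc i
    have hexp : (v i - c) ⬝ᵥ (Q *ᵥ (v i - c)) =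
        v i ⬝ᵥ (Q *ᵥ v i) - 2 * (c ⬝ᵥ (Q *ᵥ v i)) + c ⬝ᵥ (Q *ᵥ c) := by
      rw [sub_dotProduct, mulVec_sub, dotProduct_sub, dotProduct_sub, hsym (v i) c]
      ring
    rw [hexp] at h
    linarith
  set u : Fin (d+1) → (Fin d → ℝ) := Fin.cons ((2:ℝ) • c) v with hu
  set A : Matrix (Fin (d+1)) (Fin d) ℝ := Matrix.of u with hA
  set r : ℝ := 4 - 4 * (c ⬝ᵥ (Q *ᵥ c)) with hr
  have hAentry : ∀ i j, (A * Q * Aᵀ) i j = (u i) ⬝ᵥ (Q *ᵥ (u j)) := by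
    intro i j
    simp only [mul_apply, mulVec, dotProduct, transpose_apply, hA, of_apply,
      Finset.mul_sum, Finset.sum_mul]
    rw [Finset.sum_comm]
    exact Finset.sum_congr rfl fun k _ => Finset.sum_congr rfl fun l _ => by ring
  have hM : brMat Q v = A * Q * Aᵀ + Matrix.single 0 0 r := by
    ext i j
    rw [Matrix.add_apply, hAentry]
    refine Fin.cases ?_ (fun i => ?_) i <;> refine Fin.cases ?_ (fun j => ?_) j
    · simp [brMat, hu, hr, smul_dotProduct, mulVec_smul, dotProduct_smul,
        Matrix.single_apply_same]
      ring
    · have hne : (0 : Fin (d+1)) ≠ j.succ := (Fin.succ_ne_zero j).symm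
      simp [brMat, Fin.succ_ne_zero, hu, hr, smul_dotProduct, Matrix.single, hne]
      rw [hg j, hsym c (v j)]
    · have hne : (0 : Fin (d+1)) ≠ i.succ := (Fin.succ_ne_zero i).symm
      simp [brMat, Fin.succ_ne_zero, hu, hr, mulVec_smul, dotProduct_smul, Matrix.single, hne]
      rw [hg i, hsym c (v i)]
    · have hne : (0 : Fin (d+1)) ≠ i.succ := (Fin.succ_ne_zero i).symm
      simp [brMat, Fin.succ_ne_zero, hu, Matrix.single, hne]
  have hquad : ∀ x : Fin (d+1) → ℝ,
      x ⬝ᵥ (brMat Q v *ᵥ x) =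
        (Aᵀ *ᵥ x) ⬝ᵥ (Q *ᵥ (Aᵀ *ᵥ x)) + r * x 0 ^ 2 := by
    intro x
    rw [hM, add_mulVec, dotProduct_add]
    congr 1
    · rw [← mulVec_mulVec, ← mulVec_mulVec, dotProduct_mulVec, ← mulVec_transpose]
    · simp [Matrix.single, mulVec, dotProduct, Finset.sum_ite_eq, ite_and, Finset.mul_sum]
      ring
  have hcc0 : 0 ≤ c ⬝ᵥ (Q *ᵥ c) := by
    have := hQpd.posSemidef.dotProduct_mulVec_nonneg c
    simpa using this
  rw [Real.sqrt_le_one]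
  constructor
  · intro h1
    refine posSemidef_iff_dotProduct_mulVec.mpr ⟨?_, ?_⟩
    · -- Hermitian
      rw [hM]
      apply IsHermitian.add
      · have : (A * Q * Aᵀ).IsSymm := by
          rw [Matrix.IsSymm]
          ext i j
          rw [transpose_apply, hAentry, hAentry, hsym]
        rw [Matrix.IsHermitian, conjTranspose_eq_transpose_of_trivial, this.eq]
      · rw [Matrix.IsHermitian, conjTranspose_eq_transpose_of_trivial]
        ext i j
        simp only [transpose_apply, Matrix.single]
        by_cases hi : i = 0 <;> by_cases hj : j = 0 <;> simp [hi, hj, of_apply, and_comm]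
    · intro x
      have := hquad x
      simp only [star_trivial]
      rw [this]
      have h2 : 0 ≤ (Aᵀ *ᵥ x) ⬝ᵥ (Q *ᵥ (Aᵀ *ᵥ x)) := by
        have := hQpd.posSemidef.dotProduct_mulVec_nonneg (Aᵀ *ᵥ x)
        simpa using this
      have h3 : 0 ≤ r := by rw [hr]; linarith
      positivity
  · intro hpsd
    -- express c in the span of v
    have hcard : Fintype.card (Fin d) = Module.finrank ℝ (Fin d → ℝ) := by
      simp [Module.finrank_fin_fun]
    have hspan := hv.span_eq_top_of_card_eq_finrank' hcard
    have hmem : c ∈ Submodule.span ℝ (Set.range v) := hspan ▸ Submodule.mem_top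
    obtain ⟨β, hβ⟩ := (Submodule.mem_span_range_iff_exists_fun ℝ).mp hmem
    set x : Fin (d+1) → ℝ := Fin.cons 1 (fun i => -2 * β i) with hx
    have hz : Aᵀ *ᵥ x = 0 := by
      funext k
      simp only [mulVec, dotProduct, transpose_apply, Fin.sum_univ_succ, hA, hx,
        Fin.cons_zero, Fin.cons_succ, of_apply, hu, Pi.zero_apply, Pi.smul_apply,
        smul_eq_mul]
      have : ∑ i, β i * v i k = c k := by
        have := congrFun hβ k
        simpa [Finset.sum_apply] using this
      rw [show (∑ i, v i k * (-2 * β i)) = -2 * ∑ i, β i * v i k by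
        rw [Finset.mul_sum]; exact Finset.sum_congr rfl fun i _ => by ring, this]
      ring
    have h0 := hpsd.dotProduct_mulVec_nonneg x
    simp only [star_trivial] at h0
    rw [hquad x, hz] at h0
    simp only [zero_dotProduct, mulVec_zero, dotProduct_zero, zero_add] at h0
    have hx0 : x 0 = 1 := by simp [hx]
    rw [hx0] at h0
    rw [hr] at h0
    nlinarith
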